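/- Let n ≥ 1 and let S, T ⊆ {1,…,n} be subsets with |S| + |T| = n. Then for every x ∈ ℂⁿ and every permutation σ of {1,…,n}, one has ∏_{s∈S, t∈T} (x_s − x_{σ(t)}) = (−1)^{|S|·|T|} · ∏_{s∈{1,…,n}∖S, t∈{1,…,n}∖T} (x_s − x_{σ(t)}). (This is the identity f_{S,T} = (−1)^{|S||T|} f_{[n]∖S,[n]∖T} as functions on 𝔥 ×_{𝔥/W} 𝔥, whose ℂ-points are exactly the pairs (x, σ·x).) -/
import Mathlib

private lemma stmt0_key {n : ℕ} (S U : Finset (Fin n)) (h : S.card + U.card = n)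
    (x : Fin n → ℂ) :
    ∏ s ∈ S, ∏ u ∈ U, (x s - x u) =
      (-1 : ℂ) ^ (S.card * U.card) * ∏ s ∈ Sᶜ, ∏ u ∈ Uᶜ, (x s - x u) := by
  by_cases hSU : (S ∩ U).Nonempty
  · obtain ⟨a, ha⟩ := hSU
    have ha' := Finset.mem_inter.mp ha
    have h1 : ∏ s ∈ S, ∏ u ∈ U, (x s - x u) = 0 :=
      Finset.prod_eq_zero ha'.1 (Finset.prod_eq_zero ha'.2 (by ring))
    have h2 : ((S ∪ U)ᶜ : Finset (Fin n)).Nonempty := by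
      rw [← Finset.card_pos, Finset.card_compl, Fintype.card_fin]
      have h3 := Finset.card_union_add_card_inter S U
      have hpos : 0 < (S ∩ U).card := Finset.card_pos.mpr ⟨a, ha⟩
      omega
    obtain ⟨b, hb⟩ := h2
    rw [Finset.mem_compl, Finset.mem_union] at hb
    push_neg at hb
    have h4 : ∏ s ∈ Sᶜ, ∏ u ∈ Uᶜ, (x s - x u) = 0 :=
      Finset.prod_eq_zero (Finset.mem_compl.mpr hb.1)
        (Finset.prod_eq_zero (Finset.mem_compl.mpr hb.2) (by ring))
    rw [h1, h4, mul_zero]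
  · have hU : U = Sᶜ := by
      apply Finset.eq_of_subset_of_card_le
      · intro u hu
        rw [Finset.mem_compl]
        intro hs
        exact hSU ⟨u, Finset.mem_inter.mpr ⟨hs, hu⟩⟩
      · rw [Finset.card_compl, Fintype.card_fin]
        omega
    rw [hU, compl_compl]
    have hcard : Sᶜ.card = U.card := by rw [hU]
    have step : ∏ s ∈ Sᶜ, ∏ u ∈ S, (x s - x u)
        = ∏ s ∈ S, ∏ u ∈ Sᶜ, ((-1 : ℂ) * (x s - x u)) := by
      rw [Finset.prod_comm]
      exact Finset.prod_congr rfl fun s _ => Finset.prod_congr rfl fun u _ => by ring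
    rw [step]
    simp only [Finset.prod_mul_distrib, Finset.prod_const]
    rw [← pow_mul, ← mul_assoc, ← pow_add, Nat.mul_comm Sᶜ.card S.card, ← two_mul,
      pow_mul, neg_one_sq, one_pow, one_mul]

/-- For subsets `S, T ⊆ {1,…,n}` with `|S| + |T| = n`, every `x ∈ ℂⁿ`
and every permutation `σ`, one has
`∏_{s∈S, t∈T} (x_s − x_{σ t}) = (−1)^{|S|·|T|} ∏_{s∉S, t∉T} (x_s − x_{σ t})`,
i.e. `f_{S,T} = (−1)^{|S||T|} f_{[n]∖S,[n]∖T}` on the ℂ-points `(x, σ·x)` of `𝔥 ×_{𝔥/W} 𝔥`. -/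
theorem stmt0 (n : ℕ) (hn : 1 ≤ n) (S T : Finset (Fin n)) (hST : S.card + T.card = n)
    (x : Fin n → ℂ) (σ : Equiv.Perm (Fin n)) :
    ∏ s ∈ S, ∏ t ∈ T, (x s - x (σ t)) =
      (-1 : ℂ) ^ (S.card * T.card) * ∏ s ∈ Sᶜ, ∏ t ∈ Tᶜ, (x s - x (σ t)) := by
  classical
  have himg : ∀ (A : Finset (Fin n)) (s : Fin n),
      ∏ t ∈ A, (x s - x (σ t)) = ∏ u ∈ A.image σ, (x s - x u) := fun A s => by
    rw [Finset.prod_image (fun a _ b _ hab => σ.injective hab)]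
  have hcompl : (Tᶜ).image σ = (T.image σ)ᶜ := by
    ext u
    simp only [Finset.mem_image, Finset.mem_compl]
    constructor
    · rintro ⟨t, ht, rfl⟩ ⟨t', ht', he⟩
      exact ht (σ.injective he ▸ ht')
    · intro hu
      exact ⟨σ.symm u, fun hs => hu ⟨σ.symm u, hs, by simp⟩, by simp⟩
  have hcard : (T.image σ).card = T.card :=
    Finset.card_image_of_injective _ σ.injective
  simp only [himg, hcompl]
  rw [← hcard] at hST ⊢
  exact stmt0_key S (T.image σ) hST x
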